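/- Let (x_n) be any sequence of complex numbers satisfying x_{n+2} = x_{n+1} + x_n. If n is a positive integer congruent to 2 modulo 4, then x_0 + x_1 + ... + x_{n-1} = L_{n/2} · x_{n/2 + 1}, where L denotes the Lucas numbers. -/
import Mathlib

open Nat

lemma cassini_pair (q : ℕ) : fib (2*q+1)^2 = fib (2*q) * fib (2*q+2) + 1 ∧
    fib (2*q+2)^2 + 1 = fib (2*q+1) * fib (2*q+3) := by
  induction q with
  | zero => simp [fib_add_two]
  | succ q ih =>
    obtain ⟨h1, h2⟩ := ih
    have hb2 : fib (2*q+2) = fib (2*q) + fib (2*q+1) := fib_add_two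
    have hb3 : fib (2*q+3) = fib (2*q+1) + fib (2*q+2) := fib_add_two (n := 2*q+1)
    have hb4 : fib (2*q+4) = fib (2*q+2) + fib (2*q+3) := fib_add_two (n := 2*q+2)
    have hb5 : fib (2*q+5) = fib (2*q+3) + fib (2*q+4) := fib_add_two (n := 2*q+3)
    simp only [show 2*(q+1) = 2*q+2 by ring, show 2*(q+1)+1 = 2*q+3 by ring,
      show 2*(q+1)+2 = 2*q+4 by ring, show 2*(q+1)+3 = 2*q+5 by ring]
    constructor <;> nlinarith [h1, h2, hb2, hb3, hb4, hb5]

lemma L_fib (L : ℕ → ℕ) (hL0 : L 0 = 2) (hL1 : L 1 = 1)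
    (hL : ∀ n, L (n + 2) = L (n + 1) + L n) :
    ∀ m, L (m+1) = fib (m+2) + fib m := by
  intro m
  induction m using Nat.twoStepInduction with
  | zero => simp [hL1]
  | one => simp [hL 0, hL0, hL1, fib_add_two]
  | more m ih1 ih2 =>
    rw [show m+2+1 = m+1+2 by ring, hL, ih1, ih2, fib_add_two (n := m+2),
      fib_add_two (n := m)]
    ring

lemma x_fib (x : ℕ → ℂ) (hx : ∀ n, x (n + 2) = x (n + 1) + x n) :
    ∀ m, x (m+1) = (fib m : ℂ) * x 0 + (fib (m+1) : ℂ) * x 1 := by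
  intro m
  induction m using Nat.twoStepInduction with
  | zero => simp
  | one => rw [hx 0]; simp [fib_add_two]; ring
  | more m ih1 ih2 =>
    rw [show m+2+1 = m+1+2 by ring, hx, ih1, ih2, fib_add_two (n := m+1),
      fib_add_two (n := m)]
    push_cast; ring

lemma sum_x (x : ℕ → ℂ) (hx : ∀ n, x (n + 2) = x (n + 1) + x n) :
    ∀ n, (∑ k ∈ Finset.range n, x k) = x (n+1) - x 1 := by
  intro n
  induction n with
  | zero => simp
  | succ n ih => rw [Finset.sum_range_succ, ih, hx]; ring

theorem sum_general_fib (L : ℕ → ℕ) (hL0 : L 0 = 2) (hL1 : L 1 = 1)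
    (hL : ∀ n, L (n + 2) = L (n + 1) + L n)
    (x : ℕ → ℂ) (hx : ∀ n, x (n + 2) = x (n + 1) + x n)
    (n : ℕ) (hn : 0 < n) (hn4 : n % 4 = 2) :
    (∑ k ∈ Finset.range n, x k) = (L (n / 2) : ℂ) * x (n / 2 + 1) := by
  obtain ⟨q, rfl⟩ : ∃ q, n = 4*q + 2 := ⟨n/4, by omega⟩
  have hd : (4*q+2)/2 = 2*q+1 := by omega
  rw [hd, sum_x x hx, show 4*q+2+1 = (4*q+2)+1 by ring, x_fib x hx (4*q+2),
    x_fib x hx (2*q+1), show 2*q+1 = 2*q+1 from rfl, L_fib L hL0 hL1 hL (2*q)]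
  obtain ⟨c1, c2⟩ := cassini_pair q
  have f1 : fib (4*q+2) = (fib (2*q+2) + fib (2*q)) * fib (2*q+1) := by
    have := fib_add (2*q) (2*q+1)
    rw [show 2*q + (2*q+1) + 1 = 4*q+2 by ring] at this
    rw [this, show 2*q+1+1 = 2*q+2 from rfl]; ring
  have f2 : fib (4*q+2+1) = (fib (2*q+2) + fib (2*q)) * fib (2*q+2) + 1 := by
    have := fib_two_mul_add_one (2*q+1)
    rw [show 2*(2*q+1)+1 = 4*q+2+1 by ring, show 2*q+1+1 = 2*q+2 from rfl] at this
    rw [this]; nlinarith [c1]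
  rw [f1, f2, show 2*q+1+1 = 2*q+2 from rfl, show 2*q+2 = 2*q+2 from rfl]
  push_cast
  ring
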